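/- For all natural numbers x and y, the point (x,y) belongs to the discrete Sierpinski triangle S_△ if and only if the binary expansions of x and y share no common 1 bit, i.e. Nat.land x y = 0. -/

import Mathlib

/-- The `i`-th stage of the discrete Sierpinski triangle:
`S_0 = {(0,0)}`, `S_{i+1} = S_i ∪ (S_i + 2^i·V)` with `V = {(1,0),(0,1)}`. -/
def sierpStage : ℕ → Set (ℕ × ℕ)
  | 0 => {(0, 0)}
  | i + 1 => sierpStage i ∪
      {p | ∃ m ∈ sierpStage i, ∃ n ∈ ({(1, 0), (0, 1)} : Set (ℕ × ℕ)), p = m + (2 ^ i) • n}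

/-- The discrete Sierpinski triangle `S_△ = ⋃ i, S_i`. -/
def sierpinski : Set (ℕ × ℕ) := ⋃ i, sierpStage i

lemma and_eq_zero_iff_testBit {x y : ℕ} :
    x &&& y = 0 ↔ ∀ k, ¬(x.testBit k ∧ y.testBit k) := by
  constructor
  · intro h k hk
    have := congrArg (fun n => n.testBit k) h
    simp [Nat.testBit_and, hk.1, hk.2] at this
  · intro h
    apply Nat.eq_of_testBit_eq
    intro k
    simp only [Nat.testBit_and, Nat.zero_testBit]
    have := h k
    rcases hx : x.testBit k <;> rcases hy : y.testBit k <;> simp_all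

lemma testBit_pow_add {i a : ℕ} (ha : a < 2 ^ i) (k : ℕ) :
    (a + 2 ^ i).testBit k = if k < i then a.testBit k else Nat.testBit 1 (k - i) := by
  have : a + 2 ^ i = 2 ^ i * 1 + a := by ring
  rw [this, Nat.testBit_two_pow_mul_add 1 ha k]

lemma stage_iff (i : ℕ) : ∀ x y : ℕ, (x, y) ∈ sierpStage i ↔
    x &&& y = 0 ∧ x < 2 ^ i ∧ y < 2 ^ i := by
  induction i with
  | zero =>
    intro x y
    simp only [sierpStage, Set.mem_singleton_iff, Prod.mk.injEq, pow_zero]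
    constructor
    · rintro ⟨rfl, rfl⟩; simp
    · rintro ⟨-, hx, hy⟩; omega
  | succ i ih =>
    intro x y
    have hpow : 2 ^ (i + 1) = 2 ^ i + 2 ^ i := by ring
    constructor
    · rintro (h | ⟨m, hm, n, hn, heq⟩)
      · obtain ⟨h1, h2, h3⟩ := (ih x y).mp h
        exact ⟨h1, by omega, by omega⟩
      · obtain ⟨h1, h2, h3⟩ := (ih m.1 m.2).mp hm
        simp only [Set.mem_insert_iff, Set.mem_singleton_iff] at hn
        rcases hn with rfl | rfl
        · have hx : x = m.1 + 2 ^ i ∧ y = m.2 := by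
            simpa [Prod.ext_iff] using heq
          obtain ⟨rfl, rfl⟩ := hx
          refine ⟨?_, by omega, by omega⟩
          rw [and_eq_zero_iff_testBit]
          intro k ⟨hk1, hk2⟩
          rw [testBit_pow_add h2] at hk1
          by_cases hki : k < i
          · rw [if_pos hki] at hk1
            exact (and_eq_zero_iff_testBit.mp h1) k ⟨hk1, hk2⟩
          · have h4 : m.2 < 2 ^ k :=
              lt_of_lt_of_le h3 (Nat.pow_le_pow_right (by norm_num) (by omega))
            rw [Nat.testBit_lt_two_pow h4] at hk2
            simp at hk2
        · have hx : x = m.1 ∧ y = m.2 + 2 ^ i := by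
            simpa [Prod.ext_iff] using heq
          obtain ⟨rfl, rfl⟩ := hx
          refine ⟨?_, by omega, by omega⟩
          rw [and_eq_zero_iff_testBit]
          intro k ⟨hk1, hk2⟩
          rw [testBit_pow_add h3] at hk2
          by_cases hki : k < i
          · rw [if_pos hki] at hk2
            exact (and_eq_zero_iff_testBit.mp h1) k ⟨hk1, hk2⟩
          · have h4 : m.1 < 2 ^ k :=
              lt_of_lt_of_le h2 (Nat.pow_le_pow_right (by norm_num) (by omega))
            rw [Nat.testBit_lt_two_pow h4] at hk1
            simp at hk1
    · rintro ⟨h1, h2, h3⟩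
      have hbit := and_eq_zero_iff_testBit.mp h1
      by_cases hx : x < 2 ^ i
      · by_cases hy : y < 2 ^ i
        · exact Or.inl ((ih x y).mpr ⟨h1, hx, hy⟩)
        · -- y ≥ 2^i, so bit i of y is set, bit i of x is not, x < 2^i automatically
          set b := y - 2 ^ i with hb
          have hylt : b < 2 ^ i := by omega
          have hydec : y = b + 2 ^ i := by omega
          have hband : x &&& b = 0 := by
            rw [and_eq_zero_iff_testBit]
            intro k ⟨hk1, hk2⟩
            by_cases hki : k < i
            · have : y.testBit k = b.testBit k := by
                rw [hydec, testBit_pow_add hylt, if_pos hki]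
              exact hbit k ⟨hk1, this ▸ hk2⟩
            · have : b < 2 ^ k := lt_of_lt_of_le hylt
                (Nat.pow_le_pow_right (by norm_num) (by omega))
              rw [Nat.testBit_lt_two_pow this] at hk2
              simp at hk2
          refine Or.inr ⟨(x, b), (ih x b).mpr ⟨hband, hx, hylt⟩, (0, 1), by simp, ?_⟩
          simp [Prod.ext_iff, hydec]
      · -- x ≥ 2^i: bit i of x is set, so bit i of y is clear, hence y < 2^i
        have hxbit : x.testBit i = true := by
          rw [Nat.testBit_eq_decide_div_mod_eq]
          have hdiv : x / 2 ^ i = 1 := by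
            rw [hpow] at h2
            apply Nat.div_eq_of_lt_le <;> omega
          simp [hdiv]
        have hybit : y.testBit i = false := by
          rcases h : y.testBit i
          · rfl
          · exact absurd ⟨hxbit, h⟩ (hbit i)
        have hy : y < 2 ^ i := by
          rw [Nat.testBit_eq_decide_div_mod_eq] at hybit
          have h4 : y / 2 ^ i % 2 ≠ 1 := by simpa using hybit
          have h5 : y / 2 ^ i < 2 := by
            rw [Nat.div_lt_iff_lt_mul (Nat.two_pow_pos i)]
            rw [hpow] at h3; omega
          have h6 : y / 2 ^ i = 0 := by
            interval_cases h : (y / 2 ^ i) <;> simp_all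
          exact (Nat.div_eq_zero_iff.mp h6).resolve_left (by positivity)
        set a := x - 2 ^ i with hadef
        have halt : a < 2 ^ i := by rw [hpow] at h2; omega
        have hxdec : x = a + 2 ^ i := by omega
        have haand : a &&& y = 0 := by
          rw [and_eq_zero_iff_testBit]
          intro k ⟨hk1, hk2⟩
          by_cases hki : k < i
          · have : x.testBit k = a.testBit k := by
              rw [hxdec, testBit_pow_add halt, if_pos hki]
            exact hbit k ⟨this ▸ hk1, hk2⟩
          · have : a < 2 ^ k := lt_of_lt_of_le halt
              (Nat.pow_le_pow_right (by norm_num) (by omega))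
            rw [Nat.testBit_lt_two_pow this] at hk1
            simp at hk1
        refine Or.inr ⟨(a, y), (ih a y).mpr ⟨haand, halt, hy⟩, (1, 0), by simp, ?_⟩
        simp [Prod.ext_iff, hxdec]

/-- A point `(x,y)` lies in the discrete Sierpinski triangle iff the binary
expansions of `x` and `y` share no common `1` bit. -/
theorem sierpinski_iff_land_eq_zero (x y : ℕ) :
    (x, y) ∈ sierpinski ↔ Nat.land x y = 0 := by
  have hland : Nat.land x y = x &&& y := rfl
  rw [hland, sierpinski, Set.mem_iUnion]
  constructor
  · rintro ⟨i, hi⟩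
    exact ((stage_iff i x y).mp hi).1
  · intro h
    refine ⟨x + y, (stage_iff (x + y) x y).mpr ⟨h, ?_, ?_⟩⟩
    · exact lt_of_le_of_lt (Nat.le_add_right x y) (Nat.lt_two_pow_self (n := x + y))
    · exact lt_of_le_of_lt (Nat.le_add_left y x) (Nat.lt_two_pow_self (n := x + y))
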